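/- Let P be a finite 3-group of order at least 27 and let H ≤ P be a subgroup of order 3 such that the centralizer of H in P has order 9. Let Ω be the coset space P/H with the natural P-action by multiplication. Then (P, Ω) satisfies Hypothesis (3fix). -/

import Mathlib

/-- Hypothesis (3fix): the action of `G` on `Ω` is faithful and transitive, every element
of `G` fixing at least four distinct points of `Ω` is the identity, and some nontrivial
element of `G` fixes at least three distinct points of `Ω`. -/
def Hyp3fix (G : Type*) [Group G] (Ω : Type*) [MulAction G Ω] : Prop :=
  MulAction.IsPretransitive G Ω ∧
  (∀ g : G, (∀ ω : Ω, g • ω = ω) → g = 1) ∧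
  (∀ g : G, ∀ a b c d : Ω, a ≠ b → a ≠ c → a ≠ d → b ≠ c → b ≠ d → c ≠ d →
      g • a = a → g • b = b → g • c = c → g • d = d → g = 1) ∧
  (∃ g : G, g ≠ 1 ∧ ∃ a b c : Ω, a ≠ b ∧ a ≠ c ∧ b ≠ c ∧
      g • a = a ∧ g • b = b ∧ g • c = c)

/-- Pigeonhole: four pairwise distinct elements force cardinality at least 4. -/
lemma four_le_card_of_distinct {α : Type*} [Finite α] (a b c d : α)
    (hab : a ≠ b) (hac : a ≠ c) (had : a ≠ d) (hbc : b ≠ c) (hbd : b ≠ d) (hcd : c ≠ d) :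
    4 ≤ Nat.card α := by
  classical
  have := Fintype.ofFinite α
  rw [Nat.card_eq_fintype_card]
  have h4 : ({a, b, c, d} : Finset α).card = 4 := by
    rw [Finset.card_insert_of_notMem (by simp [hab, hac, had]),
        Finset.card_insert_of_notMem (by simp [hbc, hbd]),
        Finset.card_insert_of_notMem (by simp [hcd]),
        Finset.card_singleton]
  calc 4 = ({a, b, c, d} : Finset α).card := h4.symm
    _ ≤ Fintype.card α := Finset.card_le_univ _

/-- If `x * x` lies in a subgroup and `x` has odd (3-power) order, so does `x`. -/
lemma mem_of_sq_mem {P : Type*} [Group P] (H : Subgroup P) (x : P) {k : ℕ}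
    (hk : x ^ (3 ^ k) = 1) (hx2 : x * x ∈ H) : x ∈ H := by
  obtain ⟨t, ht⟩ : Odd (3 ^ k) := Odd.pow (⟨1, by norm_num⟩ : Odd 3)
  have hx : x = (x * x) ^ (t + 1) := by
    rw [← pow_two, ← pow_mul]
    have : 2 * (t + 1) = 3 ^ k + 1 := by omega
    rw [this, pow_succ, hk, one_mul]
  rw [hx]
  exact pow_mem hx2 (t + 1)

/-- Let `P` be a finite `3`-group of order at least `27` and `H ≤ P` a subgroup of
order `3` whose centralizer in `P` has order `9`. Then `P` acting on the coset space
`P/H` satisfies Hypothesis (3fix). -/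
theorem hyp3fix_of_three_group_maximal_class (P : Type*) [Group P] [Finite P]
    (hP : IsPGroup 3 P) (hcard : 27 ≤ Nat.card P)
    (H : Subgroup P) (hH : Nat.card H = 3)
    (hcent : Nat.card (Subgroup.centralizer (H : Set P)) = 9) :
    Hyp3fix P (P ⧸ H) := by
  classical
  set C := Subgroup.centralizer (H : Set P) with hC
  set N := Subgroup.normalizer (H : Set P) with hN
  -- a generator of H
  have hnt : Nontrivial H := (Finite.one_lt_card_iff_nontrivial).mp (by omega)
  obtain ⟨a, ha1⟩ := exists_ne (1 : H)
  have hmem : (a : P) ∈ H := a.2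
  have hne1 : (a : P) ≠ 1 := by
    intro h
    exact ha1 (Subtype.coe_injective (by simpa using h))
  set h0 : P := (a : P) with hh0
  -- every nontrivial element of H generates H
  have key0 : ∀ u : P, u ∈ H → u ≠ 1 → Subgroup.zpowers u = H := by
    intro u hu hu1
    have hdvd : orderOf u ∣ 3 := hH ▸ Subgroup.orderOf_dvd_natCard H hu
    have hord : orderOf u = 3 := by
      rcases (Nat.prime_three.eq_one_or_self_of_dvd _ hdvd) with h | h
      · exact absurd (orderOf_eq_one_iff.mp h) hu1
      · exact h
    exact Subgroup.eq_of_le_of_card_ge (Subgroup.zpowers_le.mpr hu)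
      (by rw [hH, Nat.card_zpowers, hord])
  have hordh0 : orderOf h0 = 3 := by
    have := key0 h0 hmem hne1
    rw [← Nat.card_zpowers, this, hH]
  -- normalizer = centralizer
  have hNC : N ≤ C := by
    intro n hn
    -- n * h0 * n⁻¹ ∈ H
    have hnh : n * h0 * n⁻¹ ∈ H := (Subgroup.mem_normalizer_iff.mp hn h0).mp hmem
    rw [← key0 h0 hmem hne1, Subgroup.mem_zpowers_iff] at hnh
    obtain ⟨j, hj⟩ := hnh
    -- reduce exponent mod 3
    have h3 : h0 ^ (3 : ℤ) = 1 := by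
      rw [show (3 : ℤ) = (3 : ℕ) by norm_num, zpow_natCast, ← hordh0, pow_orderOf_eq_one]
    have hj' : h0 ^ (j % 3) = n * h0 * n⁻¹ := by
      rw [← hj]
      conv_rhs => rw [show j = 3 * (j / 3) + j % 3 from (Int.mul_ediv_add_emod j 3).symm]
      rw [zpow_add, zpow_mul, h3, one_zpow, one_mul]
    have hjr : j % 3 = 0 ∨ j % 3 = 1 ∨ j % 3 = 2 := by omega
    have hcomm : n * h0 = h0 * n := by
      rcases hjr with h | h | h
      · exfalso
        rw [h, zpow_zero] at hj'
        apply hne1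
        calc h0 = n⁻¹ * (n * h0 * n⁻¹) * n := by group
          _ = n⁻¹ * 1 * n := by rw [← hj']
          _ = 1 := by group
      · rw [h, zpow_one] at hj'
        calc n * h0 = (n * h0 * n⁻¹) * n := by group
          _ = h0 * n := by rw [← hj']
      · exfalso
        rw [h] at hj'
        have hinv : n * h0 * n⁻¹ = h0⁻¹ := by
          rw [← hj']
          have h1 : h0 ^ (2 : ℤ) * h0 = 1 := by
            rw [show (h0 : P) ^ (2:ℤ) * h0 = h0 ^ (3:ℤ) by group, h3]
          exact eq_inv_of_mul_eq_one_left h1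
        -- n² centralizes h0
        have h2 : n * n * h0 * (n * n)⁻¹ = h0 := by
          calc n * n * h0 * (n * n)⁻¹ = n * (n * h0 * n⁻¹) * n⁻¹ := by group
            _ = n * h0⁻¹ * n⁻¹ := by rw [hinv]
            _ = (n * h0 * n⁻¹)⁻¹ := by group
            _ = (h0⁻¹)⁻¹ := by rw [hinv]
            _ = h0 := inv_inv h0
        -- n is a power of n²
        obtain ⟨k, hk⟩ := hP n
        obtain ⟨t, ht⟩ : Odd (3 ^ k) := Odd.pow (⟨1, by norm_num⟩ : Odd 3)
        have hnn : n = (n * n) ^ (t + 1) := by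
          rw [← pow_two, ← pow_mul]
          have h21 : 2 * (t + 1) = 3 ^ k + 1 := by omega
          rw [h21, pow_succ, hk, one_mul]
        have hcn : Commute (n * n) h0 := by
          show (n * n) * h0 = h0 * (n * n)
          calc (n * n) * h0 = (n * n * h0 * (n * n)⁻¹) * (n * n) := by group
            _ = h0 * (n * n) := by rw [h2]
        have hcn' : Commute n h0 := by rw [hnn]; exact hcn.pow_left (t + 1)
        have heq1 : n * h0 * n⁻¹ = h0 := by
          have := hcn'.eq
          calc n * h0 * n⁻¹ = (n * h0) * n⁻¹ := by group
            _ = (h0 * n) * n⁻¹ := by rw [this]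
            _ = h0 := by group
        rw [hinv] at heq1
        have heq2 : h0 * h0 = 1 := by
          nth_rewrite 1 [← heq1]; group
        have hd2 : orderOf h0 ∣ 2 := orderOf_dvd_of_pow_eq_one (by rw [pow_two]; exact heq2)
        rw [hordh0] at hd2
        norm_num at hd2
    -- n centralizes all of H
    rw [Subgroup.mem_centralizer_iff]
    intro x hx
    have hx' : x ∈ H := hx
    rw [← key0 h0 hmem hne1, Subgroup.mem_zpowers_iff] at hx'
    obtain ⟨m, hm⟩ := hx'
    rw [← hm]
    have hc : Commute n h0 := hcomm
    exact ((hc.symm.zpow_left m)).eq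
  have hCN : C ≤ N := by
    intro c hc
    rw [Subgroup.mem_normalizer_iff]
    intro x
    constructor
    · intro hx
      have hcx : x * c = c * x := Subgroup.mem_centralizer_iff.mp hc x hx
      have : c * x * c⁻¹ = x := by rw [← hcx]; group
      rwa [this]
    · intro hx
      have hcx : (c * x * c⁻¹) * c = c * (c * x * c⁻¹) :=
        Subgroup.mem_centralizer_iff.mp hc _ hx
      have : x = c * x * c⁻¹ := by
        have h1 : c * x = c * (c * x * c⁻¹) := by
          calc c * x = (c * x * c⁻¹) * c := by group
            _ = c * (c * x * c⁻¹) := hcx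
        exact mul_left_cancel h1
      rw [this]; exact hx
  have hNeqC : N = C := le_antisymm hNC hCN
  have hNcard : Nat.card N = 9 := by rw [hNeqC]; exact hcent
  -- fixed point characterization
  have hfix : ∀ g x : P, g • ((x : P ⧸ H)) = ↑x ↔ x⁻¹ * g * x ∈ H := by
    intro g x
    rw [MulAction.Quotient.smul_mk, smul_eq_mul, QuotientGroup.eq]
    constructor
    · intro hm
      have := inv_mem hm
      simpa [mul_inv_rev, mul_assoc] using this
    · intro hm
      have := inv_mem hm
      simpa [mul_inv_rev, mul_assoc] using this
  -- two fixed cosets give a normalizer element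
  have hL : ∀ g x y : P, g ≠ 1 → x⁻¹ * g * x ∈ H → y⁻¹ * g * y ∈ H → x⁻¹ * y ∈ N := by
    intro g x y hg hx hy
    have hgx1 : x⁻¹ * g * x ≠ 1 := by
      intro hcon
      apply hg
      have : g = x * 1 * x⁻¹ := by rw [← hcon]; group
      simpa using this
    have hgy1 : y⁻¹ * g * y ≠ 1 := by
      intro hcon
      apply hg
      have : g = y * 1 * y⁻¹ := by rw [← hcon]; group
      simpa using this
    have hzx : Subgroup.zpowers (x⁻¹ * g * x) = H := key0 _ hx hgx1
    have hzy : Subgroup.zpowers (y⁻¹ * g * y) = H := key0 _ hy hgy1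
    have hconjx : ∀ k : ℤ, (x⁻¹ * g * x) ^ k = x⁻¹ * g ^ k * x := by
      intro k
      rw [show x⁻¹ * g * x = x⁻¹ * g * (x⁻¹)⁻¹ by rw [inv_inv], conj_zpow, inv_inv]
    have hconjy : ∀ k : ℤ, (y⁻¹ * g * y) ^ k = y⁻¹ * g ^ k * y := by
      intro k
      rw [show y⁻¹ * g * y = y⁻¹ * g * (y⁻¹)⁻¹ by rw [inv_inv], conj_zpow, inv_inv]
    rw [Subgroup.mem_normalizer_iff]
    intro p
    constructor
    · intro hp
      rw [← hzy, Subgroup.mem_zpowers_iff] at hp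
      obtain ⟨k, hk⟩ := hp
      rw [hconjy] at hk
      rw [← hzx, Subgroup.mem_zpowers_iff]
      refine ⟨k, ?_⟩
      rw [hconjx, ← hk]
      group
    · intro hp
      rw [← hzx, Subgroup.mem_zpowers_iff] at hp
      obtain ⟨k, hk⟩ := hp
      rw [hconjx] at hk
      rw [← hzy, Subgroup.mem_zpowers_iff]
      refine ⟨k, ?_⟩
      rw [hconjy]
      have hp2 : p = (x⁻¹ * y)⁻¹ * (x⁻¹ * g ^ k * x) * (x⁻¹ * y) := by
        rw [hk]; group
      rw [hp2]; group
  -- card of quotient N / H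
  have hHN : H ≤ N := Subgroup.le_normalizer
  have hsub3 : Nat.card (H.subgroupOf N) = 3 := by
    rw [Nat.card_congr (Subgroup.subgroupOfEquivOfLe hHN).toEquiv, hH]
  have hquot3 : Nat.card (↥N ⧸ H.subgroupOf N) = 3 := by
    have := Subgroup.card_eq_card_quotient_mul_card_subgroup (H.subgroupOf N)
    rw [hNcard, hsub3] at this
    omega
  -- Part 3: four fixed points force identity
  have part3 : ∀ g : P, ∀ a b c d : P ⧸ H, a ≠ b → a ≠ c → a ≠ d → b ≠ c → b ≠ d → c ≠ d →
      g • a = a → g • b = b → g • c = c → g • d = d → g = 1 := by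
    intro g a b c d hab hac had hbc hbd hcd ha hb hc hd
    by_contra hg
    obtain ⟨xa, rfl⟩ := QuotientGroup.mk_surjective a
    obtain ⟨xb, rfl⟩ := QuotientGroup.mk_surjective b
    obtain ⟨xc, rfl⟩ := QuotientGroup.mk_surjective c
    obtain ⟨xd, rfl⟩ := QuotientGroup.mk_surjective d
    have pxa := (hfix g xa).mp ha
    have pxb := (hfix g xb).mp hb
    have pxc := (hfix g xc).mp hc
    have pxd := (hfix g xd).mp hd
    have hkey : ∀ (x y : P) (px : xa⁻¹ * x ∈ N) (py : xa⁻¹ * y ∈ N),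
        ((⟨xa⁻¹ * x, px⟩ : N) : ↥N ⧸ H.subgroupOf N) = ((⟨xa⁻¹ * y, py⟩ : N) : ↥N ⧸ H.subgroupOf N)
          ↔ ((x : P ⧸ H) = (y : P ⧸ H)) := by
      intro x y px py
      rw [QuotientGroup.eq, QuotientGroup.eq, Subgroup.mem_subgroupOf]
      have : (((⟨xa⁻¹ * x, px⟩ : N)⁻¹ * ⟨xa⁻¹ * y, py⟩ : N) : P) = x⁻¹ * y := by
        push_cast
        group
      rw [this]
    have na : xa⁻¹ * xa ∈ N := hL g xa xa hg pxa pxa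
    have nb : xa⁻¹ * xb ∈ N := hL g xa xb hg pxa pxb
    have nc : xa⁻¹ * xc ∈ N := hL g xa xc hg pxa pxc
    have nd : xa⁻¹ * xd ∈ N := hL g xa xd hg pxa pxd
    have h4 : 4 ≤ Nat.card (↥N ⧸ H.subgroupOf N) := by
      apply four_le_card_of_distinct
        ((⟨xa⁻¹ * xa, na⟩ : N) : ↥N ⧸ H.subgroupOf N)
        ((⟨xa⁻¹ * xb, nb⟩ : N) : ↥N ⧸ H.subgroupOf N)
        ((⟨xa⁻¹ * xc, nc⟩ : N) : ↥N ⧸ H.subgroupOf N)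
        ((⟨xa⁻¹ * xd, nd⟩ : N) : ↥N ⧸ H.subgroupOf N)
      · exact fun h => hab ((hkey xa xb na nb).mp h)
      · exact fun h => hac ((hkey xa xc na nc).mp h)
      · exact fun h => had ((hkey xa xd na nd).mp h)
      · exact fun h => hbc ((hkey xb xc nb nc).mp h)
      · exact fun h => hbd ((hkey xb xd nb nd).mp h)
      · exact fun h => hcd ((hkey xc xd nc nd).mp h)
    omega
  -- Part 2: faithfulness
  have part2 : ∀ g : P, (∀ ω : P ⧸ H, g • ω = ω) → g = 1 := by
    intro g hg
    by_contra hg1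
    have hall : ∀ x : P, x ∈ N := by
      intro x
      have h1 : (1 : P)⁻¹ * g * 1 ∈ H := (hfix g 1).mp (hg _)
      have hx : x⁻¹ * g * x ∈ H := (hfix g x).mp (hg _)
      have := hL g 1 x hg1 h1 hx
      simpa using this
    have hNtop : N = ⊤ := (Subgroup.eq_top_iff' N).mpr hall
    have : Nat.card N = Nat.card P := by rw [hNtop]; exact Subgroup.card_top
    omega
  -- Part 4: existence of a nontrivial element with 3 fixed points
  have hex : ∃ x : P, x ∈ C ∧ x ∉ H := by
    by_contra hno
    push_neg at hno
    have hle : C ≤ H := fun x hx => hno x hx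
    have := Subgroup.card_le_of_le hle
    omega
  obtain ⟨x, hxC, hxH⟩ := hex
  have hx2H : x * x ∉ H := by
    intro hx2
    obtain ⟨k, hk⟩ := hP x
    exact hxH (mem_of_sq_mem H x hk hx2)
  have hcommx : h0 * x = x * h0 := Subgroup.mem_centralizer_iff.mp hxC h0 hmem
  refine ⟨inferInstance, part2, part3, ⟨h0, hne1, ((1 : P) : P ⧸ H), ((x : P) : P ⧸ H),
    ((x * x : P) : P ⧸ H), ?_, ?_, ?_, ?_, ?_, ?_⟩⟩
  · intro h
    exact hxH (by simpa using QuotientGroup.eq.mp h)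
  · intro h
    exact hx2H (by simpa using QuotientGroup.eq.mp h)
  · intro h
    have := QuotientGroup.eq.mp h
    exact hxH (by simpa [mul_assoc] using this)
  · rw [hfix]; simpa using hmem
  · rw [hfix]
    have heq : x⁻¹ * h0 * x = h0 := by rw [mul_assoc, hcommx]; group
    rw [heq]; exact hmem
  · rw [hfix]
    have h1 : h0 * (x * x) = (x * x) * h0 := by
      rw [← mul_assoc, hcommx, mul_assoc, hcommx, ← mul_assoc]
    have heq : (x * x)⁻¹ * h0 * (x * x) = h0 := by
      rw [mul_assoc, h1]; group
    rw [heq]; exact hmem
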